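/- Write λ₊ = λ + ℓη, λ₋ = λ − ℓη, θ̄_a(z) = θ_a(z|τ/2), and let V(μ,z) be the 2×2 matrix with rows (θ̄₄(z+μ), θ̄₃(z+μ)) and (θ̄₄(z−μ), θ̄₃(z−μ)). Then for every function f : ℂ → ℂ, every j ∈ {1,2}, and every z with θ₁(2z|τ) ≠ 0: θ̄₄(z+λ₊)·(L₁ⱼ(λ)f)(z) + θ̄₃(z+λ₊)·(L₂ⱼ(λ)f)(z) = θ₁(2λ₊|τ)·V(λ₋,z)₁ⱼ·f(z+η) and θ̄₄(z−λ₊)·(L₁ⱼ(λ)f)(z) + θ̄₃(z−λ₊)·(L₂ⱼ(λ)f)(z) = θ₁(2λ₊|τ)·V(λ₋,z)₂ⱼ·f(z−η). (This is the factorized form L(λ) = θ₁(2λ₊)·:V⁻¹(λ₊,z)·diag(e^{η∂_z}, e^{−η∂_z})·V(λ₋,z):.) -/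

import Mathlib

/-- Jacobi theta function `θ_a(z|τ)` for `a = 1,2,3,4`. -/
noncomputable def jTheta (a : ℕ) (z τ : ℂ) : ℂ :=
  match a with
  | 1 => -∑' k : ℤ, Complex.exp ((Real.pi : ℂ) * Complex.I * τ * ((k : ℂ) + 1/2)^2
          + 2 * (Real.pi : ℂ) * Complex.I * (z + 1/2) * ((k : ℂ) + 1/2))
  | 2 => ∑' k : ℤ, Complex.exp ((Real.pi : ℂ) * Complex.I * τ * ((k : ℂ) + 1/2)^2
          + 2 * (Real.pi : ℂ) * Complex.I * z * ((k : ℂ) + 1/2))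
  | 3 => ∑' k : ℤ, Complex.exp ((Real.pi : ℂ) * Complex.I * τ * (k : ℂ)^2
          + 2 * (Real.pi : ℂ) * Complex.I * z * (k : ℂ))
  | 4 => ∑' k : ℤ, Complex.exp ((Real.pi : ℂ) * Complex.I * τ * (k : ℂ)^2
          + 2 * (Real.pi : ℂ) * Complex.I * (z + 1/2) * (k : ℂ))
  | _ => 0

/-- Sklyanin difference operator `s_a^{(ℓ)}` with parameters `τ, η` and spin `ℓ`. -/
noncomputable def sOp (τ η ℓ : ℂ) (a : ℕ) (f : ℂ → ℂ) (z : ℂ) : ℂ :=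
  (jTheta (a+1) (2*z - 2*ℓ*η) τ * f (z + η)
    - jTheta (a+1) (-(2*z) - 2*ℓ*η) τ * f (z - η)) / jTheta 1 (2*z) τ

/-- Entries of the elliptic quantum L-operator `L(λ)` (indices in `Fin 2`). -/
noncomputable def LOp (τ η ℓ lam : ℂ) (i j : Fin 2) (f : ℂ → ℂ) (z : ℂ) : ℂ :=
  if i = 0 then
    if j = 0 then
      (1/2) * (jTheta 1 (2*lam) τ * sOp τ η ℓ 0 f z + jTheta 4 (2*lam) τ * sOp τ η ℓ 3 f z)
    else
      (1/2) * (jTheta 2 (2*lam) τ * sOp τ η ℓ 1 f z + jTheta 3 (2*lam) τ * sOp τ η ℓ 2 f z)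
  else
    if j = 0 then
      (1/2) * (jTheta 2 (2*lam) τ * sOp τ η ℓ 1 f z - jTheta 3 (2*lam) τ * sOp τ η ℓ 2 f z)
    else
      (1/2) * (jTheta 1 (2*lam) τ * sOp τ η ℓ 0 f z - jTheta 4 (2*lam) τ * sOp τ η ℓ 3 f z)

/-- The matrix `V(μ,z)` with rows `(θ̄₄(z+μ), θ̄₃(z+μ))` and `(θ̄₄(z−μ), θ̄₃(z−μ))`,
where `θ̄_a(w) = θ_a(w|τ/2)`. -/
noncomputable def Vmat (τ μ z : ℂ) (i j : Fin 2) : ℂ :=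
  if i = 0 then (if j = 0 then jTheta 4 (z + μ) (τ/2) else jTheta 3 (z + μ) (τ/2))
  else (if j = 0 then jTheta 4 (z - μ) (τ/2) else jTheta 3 (z - μ) (τ/2))

open Complex Function
set_option maxHeartbeats 1000000

noncomputable def Gser (τ w : ℂ) : ℂ :=
  ∑' k : ℤ, Complex.exp ((Real.pi : ℂ) * Complex.I * τ * (k : ℂ)^2
          + 2 * (Real.pi : ℂ) * Complex.I * w * (k : ℂ))

noncomputable def Hser (τ w : ℂ) : ℂ :=
  ∑' k : ℤ, Complex.exp ((Real.pi : ℂ) * Complex.I * τ * ((k : ℂ) + 1/2)^2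
          + 2 * (Real.pi : ℂ) * Complex.I * w * ((k : ℂ) + 1/2))

lemma jT1 (z τ : ℂ) : jTheta 1 z τ = -Hser τ (z + 1/2) := rfl
lemma jT2 (z τ : ℂ) : jTheta 2 z τ = Hser τ z := rfl
lemma jT3 (z τ : ℂ) : jTheta 3 z τ = Gser τ z := rfl
lemma jT4 (z τ : ℂ) : jTheta 4 z τ = Gser τ (z + 1/2) := rfl

lemma gsum {τ : ℂ} (hτ : 0 < τ.im) (w : ℂ) :
    Summable (fun k : ℤ => Complex.exp ((Real.pi : ℂ) * Complex.I * τ * (k : ℂ)^2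
          + 2 * (Real.pi : ℂ) * Complex.I * w * (k : ℂ))) := by
  refine ((summable_jacobiTheta₂_term_iff w τ).mpr hτ).congr fun k => ?_
  rw [jacobiTheta₂_term]
  congr 1
  ring

lemma hsum {τ : ℂ} (hτ : 0 < τ.im) (w : ℂ) :
    Summable (fun k : ℤ => Complex.exp ((Real.pi : ℂ) * Complex.I * τ * ((k : ℂ) + 1/2)^2
          + 2 * (Real.pi : ℂ) * Complex.I * w * ((k : ℂ) + 1/2))) := by
  have := ((gsum hτ (w + τ/2)).mul_left
      (Complex.exp ((Real.pi : ℂ) * Complex.I * τ / 4 + (Real.pi : ℂ) * Complex.I * w)))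
  refine this.congr fun k => ?_
  rw [← Complex.exp_add]
  congr 1
  ring
example : True := trivial

-- injections and compl
def g1 : ℤ × ℤ → ℤ × ℤ := fun p => (p.1 + p.2, p.1 - p.2)
def g2 : ℤ × ℤ → ℤ × ℤ := fun p => (p.1 + p.2 + 1, p.1 - p.2)

lemma g1_inj : Injective g1 := by
  intro a b h
  simp only [g1, Prod.mk.injEq] at h
  ext <;> omega

lemma g2_inj : Injective g2 := by
  intro a b h
  simp only [g2, Prod.mk.injEq] at h
  ext <;> omega

lemma range_g1 : Set.range g1 = {p : ℤ × ℤ | (p.1 + p.2) % 2 = 0} := by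
  ext p
  constructor
  · rintro ⟨⟨A, B⟩, rfl⟩
    simp only [g1, Set.mem_setOf_eq]
    omega
  · intro h
    simp only [Set.mem_setOf_eq] at h
    exact ⟨((p.1 + p.2)/2, (p.1 - p.2)/2), by simp only [g1]; ext <;> simp <;> omega⟩

lemma range_g2 : Set.range g2 = (Set.range g1)ᶜ := by
  rw [range_g1]
  ext p
  constructor
  · rintro ⟨⟨A, B⟩, rfl⟩
    simp only [g2, Set.mem_compl_iff, Set.mem_setOf_eq]
    omega
  · intro h
    simp only [Set.mem_compl_iff, Set.mem_setOf_eq] at h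
    exact ⟨((p.1 + p.2 - 1)/2, (p.1 - p.2 - 1)/2), by simp only [g2]; ext <;> simp <;> omega⟩

lemma compl_g : IsCompl (Set.range g1) (Set.range g2) := by
  rw [range_g2]; exact isCompl_compl

lemma gmul {τ : ℂ} (hτ : 0 < τ.im) (x y : ℂ) :
    Gser (τ/2) x * Gser (τ/2) y
      = Gser τ (x+y) * Gser τ (x-y) + Hser τ (x+y) * Hser τ (x-y) := by
  have h2 : 0 < (τ/2).im := by
    have : (τ/2).im = τ.im / 2 := by
      simp [Complex.div_im, Complex.normSq]
    rw [this]; linarith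
  simp only [Gser, Hser]
  rw [tsum_mul_tsum_of_summable_norm (gsum h2 x).norm (gsum h2 y).norm]
  set F : ℤ × ℤ → ℂ := fun z =>
      Complex.exp ((Real.pi : ℂ) * Complex.I * (τ/2) * (z.1 : ℂ)^2
          + 2 * (Real.pi : ℂ) * Complex.I * x * (z.1 : ℂ))
      * Complex.exp ((Real.pi : ℂ) * Complex.I * (τ/2) * (z.2 : ℂ)^2
          + 2 * (Real.pi : ℂ) * Complex.I * y * (z.2 : ℂ)) with hF
  have hEven : HasSum (F ∘ g1)
      ((∑' k : ℤ, Complex.exp ((Real.pi : ℂ) * Complex.I * τ * (k : ℂ)^2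
          + 2 * (Real.pi : ℂ) * Complex.I * (x+y) * (k : ℂ)))
       * (∑' k : ℤ, Complex.exp ((Real.pi : ℂ) * Complex.I * τ * (k : ℂ)^2
          + 2 * (Real.pi : ℂ) * Complex.I * (x-y) * (k : ℂ)))) := by
    have hs := (summable_mul_of_summable_norm (gsum hτ (x+y)).norm (gsum hτ (x-y)).norm).hasSum
    rw [← tsum_mul_tsum_of_summable_norm (gsum hτ (x+y)).norm (gsum hτ (x-y)).norm] at hs
    have hfe : (fun z : ℤ × ℤ =>
        Complex.exp ((Real.pi : ℂ) * Complex.I * τ * (z.1 : ℂ)^2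
          + 2 * (Real.pi : ℂ) * Complex.I * (x+y) * (z.1 : ℂ))
        * Complex.exp ((Real.pi : ℂ) * Complex.I * τ * (z.2 : ℂ)^2
          + 2 * (Real.pi : ℂ) * Complex.I * (x-y) * (z.2 : ℂ))) = F ∘ g1 := by
      funext p
      simp only [hF, g1, Function.comp_apply]
      rw [← Complex.exp_add, ← Complex.exp_add]
      congr 1
      push_cast
      ring
    rwa [hfe] at hs
  have hOdd : HasSum (F ∘ g2)
      ((∑' k : ℤ, Complex.exp ((Real.pi : ℂ) * Complex.I * τ * ((k : ℂ)+1/2)^2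
          + 2 * (Real.pi : ℂ) * Complex.I * (x+y) * ((k : ℂ)+1/2)))
       * (∑' k : ℤ, Complex.exp ((Real.pi : ℂ) * Complex.I * τ * ((k : ℂ)+1/2)^2
          + 2 * (Real.pi : ℂ) * Complex.I * (x-y) * ((k : ℂ)+1/2)))) := by
    have hs := (summable_mul_of_summable_norm (hsum hτ (x+y)).norm (hsum hτ (x-y)).norm).hasSum
    rw [← tsum_mul_tsum_of_summable_norm (hsum hτ (x+y)).norm (hsum hτ (x-y)).norm] at hs
    have hfe : (fun z : ℤ × ℤ =>
        Complex.exp ((Real.pi : ℂ) * Complex.I * τ * ((z.1 : ℂ)+1/2)^2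
          + 2 * (Real.pi : ℂ) * Complex.I * (x+y) * ((z.1 : ℂ)+1/2))
        * Complex.exp ((Real.pi : ℂ) * Complex.I * τ * ((z.2 : ℂ)+1/2)^2
          + 2 * (Real.pi : ℂ) * Complex.I * (x-y) * ((z.2 : ℂ)+1/2))) = F ∘ g2 := by
      funext p
      simp only [hF, g2, Function.comp_apply]
      rw [← Complex.exp_add, ← Complex.exp_add]
      congr 1
      push_cast
      ring
    rwa [hfe] at hs
  exact ((g1_inj.hasSum_range_iff.2 hEven).add_isCompl (f := F) compl_g
    (g2_inj.hasSum_range_iff.2 hOdd)).tsum_eq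
lemma Gser_add_one (τ w : ℂ) : Gser τ (w + 1) = Gser τ w := by
  refine tsum_congr fun k => ?_
  have h : (Real.pi : ℂ) * Complex.I * τ * (k : ℂ)^2
        + 2 * (Real.pi : ℂ) * Complex.I * (w+1) * (k : ℂ)
      = ((Real.pi : ℂ) * Complex.I * τ * (k : ℂ)^2
        + 2 * (Real.pi : ℂ) * Complex.I * w * (k : ℂ)) + (k : ℂ) * (2 * (Real.pi:ℂ) * Complex.I) := by
    ring
  rw [h, Complex.exp_add, Complex.exp_int_mul_two_pi_mul_I, mul_one]

lemma Hser_add_one (τ w : ℂ) : Hser τ (w + 1) = -Hser τ w := by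
  rw [Hser, Hser, ← tsum_neg]
  refine tsum_congr fun k => ?_
  have h : (Real.pi : ℂ) * Complex.I * τ * ((k : ℂ)+1/2)^2
        + 2 * (Real.pi : ℂ) * Complex.I * (w+1) * ((k : ℂ)+1/2)
      = ((Real.pi : ℂ) * Complex.I * τ * ((k : ℂ)+1/2)^2
        + 2 * (Real.pi : ℂ) * Complex.I * w * ((k : ℂ)+1/2))
        + (k : ℂ) * (2 * (Real.pi:ℂ) * Complex.I) + (Real.pi:ℂ) * Complex.I := by
    ring
  rw [h, Complex.exp_add, Complex.exp_add, Complex.exp_int_mul_two_pi_mul_I, mul_one,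
    Complex.exp_pi_mul_I, mul_neg_one]

lemma Gser_neg (τ w : ℂ) : Gser τ (-w) = Gser τ w := by
  rw [Gser, Gser, ← (Equiv.neg ℤ).tsum_eq]
  refine tsum_congr fun k => ?_
  congr 1
  push_cast [Equiv.neg_apply]
  ring

lemma jT3_even (w s : ℂ) : jTheta 3 (-w) s = jTheta 3 w s := by
  simp only [jT3]; exact Gser_neg s w

lemma jT4_even (w s : ℂ) : jTheta 4 (-w) s = jTheta 4 w s := by
  simp only [jT4]
  rw [show -w + (1:ℂ)/2 = -(w - 1/2) by ring, Gser_neg,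
    show w + (1:ℂ)/2 = (w - 1/2) + 1 by ring, Gser_add_one]

lemma M1 {τ : ℂ} (hτ : 0 < τ.im) (u v : ℂ) :
    jTheta 1 u τ * jTheta 1 v τ + jTheta 4 u τ * jTheta 4 v τ
      = jTheta 4 ((u+v)/2) (τ/2) * jTheta 3 ((u-v)/2) (τ/2) := by
  simp only [jT1, jT3, jT4]
  have h := gmul hτ ((u+v)/2 + 1/2) ((u-v)/2)
  rw [show (u+v)/2 + 1/2 + (u-v)/2 = u + 1/2 by ring,
      show (u+v)/2 + 1/2 - (u-v)/2 = v + 1/2 by ring] at h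
  linear_combination -h

lemma M2 {τ : ℂ} (hτ : 0 < τ.im) (u v : ℂ) :
    jTheta 4 u τ * jTheta 4 v τ - jTheta 1 u τ * jTheta 1 v τ
      = jTheta 3 ((u+v)/2) (τ/2) * jTheta 4 ((u-v)/2) (τ/2) := by
  simp only [jT1, jT3, jT4]
  have h := gmul hτ ((u+v)/2) ((u-v)/2 + 1/2)
  rw [show (u+v)/2 + ((u-v)/2 + 1/2) = u + 1/2 by ring,
      show (u+v)/2 - ((u-v)/2 + 1/2) = v - 1/2 by ring] at h
  have hg : Gser τ (v + 1/2) = Gser τ (v - 1/2) := by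
    rw [show v + (1:ℂ)/2 = (v - 1/2) + 1 by ring, Gser_add_one]
  have hh : Hser τ (v + 1/2) = -Hser τ (v - 1/2) := by
    rw [show v + (1:ℂ)/2 = (v - 1/2) + 1 by ring, Hser_add_one]
  linear_combination Gser τ (u + 1/2) * hg - Hser τ (u + 1/2) * hh - h

lemma M3 {τ : ℂ} (hτ : 0 < τ.im) (u v : ℂ) :
    jTheta 3 u τ * jTheta 3 v τ + jTheta 2 u τ * jTheta 2 v τ
      = jTheta 3 ((u+v)/2) (τ/2) * jTheta 3 ((u-v)/2) (τ/2) := by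
  simp only [jT2, jT3]
  have h := gmul hτ ((u+v)/2) ((u-v)/2)
  rw [show (u+v)/2 + (u-v)/2 = u by ring, show (u+v)/2 - (u-v)/2 = v by ring] at h
  linear_combination -h

lemma M4 {τ : ℂ} (hτ : 0 < τ.im) (u v : ℂ) :
    jTheta 3 u τ * jTheta 3 v τ - jTheta 2 u τ * jTheta 2 v τ
      = jTheta 4 ((u+v)/2) (τ/2) * jTheta 4 ((u-v)/2) (τ/2) := by
  simp only [jT2, jT3, jT4]
  have h := gmul hτ ((u+v)/2 + 1/2) ((u-v)/2 + 1/2)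
  rw [show (u+v)/2 + 1/2 + ((u-v)/2 + 1/2) = u + 1 by ring,
      show (u+v)/2 + 1/2 - ((u-v)/2 + 1/2) = v by ring] at h
  have hg : Gser τ (u + 1) = Gser τ u := Gser_add_one τ u
  have hh : Hser τ (u + 1) = -Hser τ u := Hser_add_one τ u
  linear_combination -h - Gser τ v * hg - Hser τ v * hh


/-- Factorized form of the L-operator:
`L(λ) = θ₁(2λ₊)·:V⁻¹(λ₊,z)·diag(e^{η∂_z}, e^{−η∂_z})·V(λ₋,z):`, stated as the pair of
linear relations obtained by multiplying by `V(λ₊,z)` from the left. -/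
theorem LOp_factorized (τ η ℓ lam : ℂ) (hτ : 0 < τ.im) (f : ℂ → ℂ) (j : Fin 2) (z : ℂ)
    (hz : jTheta 1 (2*z) τ ≠ 0) :
    (jTheta 4 (z + (lam + ℓ*η)) (τ/2) * LOp τ η ℓ lam 0 j f z
        + jTheta 3 (z + (lam + ℓ*η)) (τ/2) * LOp τ η ℓ lam 1 j f z
      = jTheta 1 (2*(lam + ℓ*η)) τ * Vmat τ (lam - ℓ*η) z 0 j * f (z + η))
    ∧ (jTheta 4 (z - (lam + ℓ*η)) (τ/2) * LOp τ η ℓ lam 0 j f z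
        + jTheta 3 (z - (lam + ℓ*η)) (τ/2) * LOp τ η ℓ lam 1 j f z
      = jTheta 1 (2*(lam + ℓ*η)) τ * Vmat τ (lam - ℓ*η) z 1 j * f (z - η)) := by
  have F1 := M1 hτ (2*lam) (2*z - 2*ℓ*η)
  rw [show (2*lam + (2*z - 2*ℓ*η))/2 = z + (lam - ℓ*η) by ring,
      show (2*lam - (2*z - 2*ℓ*η))/2 = -(z - (lam + ℓ*η)) by ring, jT3_even] at F1
  have F2 := M4 hτ (2*lam) (2*z - 2*ℓ*η)
  rw [show (2*lam + (2*z - 2*ℓ*η))/2 = z + (lam - ℓ*η) by ring,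
      show (2*lam - (2*z - 2*ℓ*η))/2 = -(z - (lam + ℓ*η)) by ring, jT4_even] at F2
  have F3 := M3 hτ (2*lam) (2*z - 2*ℓ*η)
  rw [show (2*lam + (2*z - 2*ℓ*η))/2 = z + (lam - ℓ*η) by ring,
      show (2*lam - (2*z - 2*ℓ*η))/2 = -(z - (lam + ℓ*η)) by ring, jT3_even] at F3
  have F4 := M2 hτ (2*lam) (2*z - 2*ℓ*η)
  rw [show (2*lam + (2*z - 2*ℓ*η))/2 = z + (lam - ℓ*η) by ring,
      show (2*lam - (2*z - 2*ℓ*η))/2 = -(z - (lam + ℓ*η)) by ring, jT4_even] at F4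
  have F1' := M1 hτ (2*lam) (-(2*z) - 2*ℓ*η)
  rw [show (2*lam + (-(2*z) - 2*ℓ*η))/2 = -(z - (lam - ℓ*η)) by ring,
      show (2*lam - (-(2*z) - 2*ℓ*η))/2 = z + (lam + ℓ*η) by ring, jT4_even] at F1'
  have F2' := M4 hτ (2*lam) (-(2*z) - 2*ℓ*η)
  rw [show (2*lam + (-(2*z) - 2*ℓ*η))/2 = -(z - (lam - ℓ*η)) by ring,
      show (2*lam - (-(2*z) - 2*ℓ*η))/2 = z + (lam + ℓ*η) by ring, jT4_even] at F2'
  have F3' := M3 hτ (2*lam) (-(2*z) - 2*ℓ*η)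
  rw [show (2*lam + (-(2*z) - 2*ℓ*η))/2 = -(z - (lam - ℓ*η)) by ring,
      show (2*lam - (-(2*z) - 2*ℓ*η))/2 = z + (lam + ℓ*η) by ring, jT3_even] at F3'
  have F4' := M2 hτ (2*lam) (-(2*z) - 2*ℓ*η)
  rw [show (2*lam + (-(2*z) - 2*ℓ*η))/2 = -(z - (lam - ℓ*η)) by ring,
      show (2*lam - (-(2*z) - 2*ℓ*η))/2 = z + (lam + ℓ*η) by ring, jT3_even] at F4'
  have F5 := M1 hτ (2*(lam + ℓ*η)) (2*z)
  rw [show (2*(lam + ℓ*η) + 2*z)/2 = z + (lam + ℓ*η) by ring,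
      show (2*(lam + ℓ*η) - 2*z)/2 = -(z - (lam + ℓ*η)) by ring, jT3_even] at F5
  have F6 := M2 hτ (2*(lam + ℓ*η)) (2*z)
  rw [show (2*(lam + ℓ*η) + 2*z)/2 = z + (lam + ℓ*η) by ring,
      show (2*(lam + ℓ*η) - 2*z)/2 = -(z - (lam + ℓ*η)) by ring, jT4_even] at F6
  fin_cases j
  · constructor
    · simp only [LOp, sOp, Vmat]
      norm_num
      linear_combination (1/2 * (jTheta 1 (2*z) τ)⁻¹) * (
        f (z+η) * jTheta 4 (z + (lam + ℓ*η)) (τ/2) * F1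
        - f (z+η) * jTheta 3 (z + (lam + ℓ*η)) (τ/2) * F2
        - f (z-η) * jTheta 4 (z + (lam + ℓ*η)) (τ/2) * F1'
        + f (z-η) * jTheta 3 (z + (lam + ℓ*η)) (τ/2) * F2'
        - f (z+η) * jTheta 4 (z + (lam - ℓ*η)) (τ/2) * F5
        + f (z+η) * jTheta 4 (z + (lam - ℓ*η)) (τ/2) * F6
        ) + jTheta 1 (2*(lam + ℓ*η)) τ * jTheta 4 (z + (lam - ℓ*η)) (τ/2) * f (z + η) * mul_inv_cancel₀ hz
    · simp only [LOp, sOp, Vmat]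
      norm_num
      linear_combination (1/2 * (jTheta 1 (2*z) τ)⁻¹) * (
        f (z+η) * jTheta 4 (z - (lam + ℓ*η)) (τ/2) * F1
        - f (z+η) * jTheta 3 (z - (lam + ℓ*η)) (τ/2) * F2
        - f (z-η) * jTheta 4 (z - (lam + ℓ*η)) (τ/2) * F1'
        + f (z-η) * jTheta 3 (z - (lam + ℓ*η)) (τ/2) * F2'
        - f (z-η) * jTheta 4 (z - (lam - ℓ*η)) (τ/2) * F5
        + f (z-η) * jTheta 4 (z - (lam - ℓ*η)) (τ/2) * F6
        ) + jTheta 1 (2*(lam + ℓ*η)) τ * jTheta 4 (z - (lam - ℓ*η)) (τ/2) * f (z - η) * mul_inv_cancel₀ hz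
  · constructor
    · simp only [LOp, sOp, Vmat]
      norm_num
      linear_combination (1/2 * (jTheta 1 (2*z) τ)⁻¹) * (
        f (z+η) * jTheta 4 (z + (lam + ℓ*η)) (τ/2) * F3
        - f (z+η) * jTheta 3 (z + (lam + ℓ*η)) (τ/2) * F4
        - f (z-η) * jTheta 4 (z + (lam + ℓ*η)) (τ/2) * F3'
        + f (z-η) * jTheta 3 (z + (lam + ℓ*η)) (τ/2) * F4'
        - f (z+η) * jTheta 3 (z + (lam - ℓ*η)) (τ/2) * F5
        + f (z+η) * jTheta 3 (z + (lam - ℓ*η)) (τ/2) * F6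
        ) + jTheta 1 (2*(lam + ℓ*η)) τ * jTheta 3 (z + (lam - ℓ*η)) (τ/2) * f (z + η) * mul_inv_cancel₀ hz
    · simp only [LOp, sOp, Vmat]
      norm_num
      linear_combination (1/2 * (jTheta 1 (2*z) τ)⁻¹) * (
        f (z+η) * jTheta 4 (z - (lam + ℓ*η)) (τ/2) * F3
        - f (z+η) * jTheta 3 (z - (lam + ℓ*η)) (τ/2) * F4
        - f (z-η) * jTheta 4 (z - (lam + ℓ*η)) (τ/2) * F3'
        + f (z-η) * jTheta 3 (z - (lam + ℓ*η)) (τ/2) * F4'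
        - f (z-η) * jTheta 3 (z - (lam - ℓ*η)) (τ/2) * F5
        + f (z-η) * jTheta 3 (z - (lam - ℓ*η)) (τ/2) * F6
        ) + jTheta 1 (2*(lam + ℓ*η)) τ * jTheta 3 (z - (lam - ℓ*η)) (τ/2) * f (z - η) * mul_inv_cancel₀ hz
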